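/- Let G be a graph and G = G1 ∪ G2 with G1 ∩ G2 = H a single vertex or a single edge (a cut vertex or cut edge configuration). If the vertex set of each Gi admits a partition into a set inducing a forest of maximum degree at most 3 and a set inducing a forest, and the partitions agree on V(H), and moreover in each Gi every neighbor of a degree-1-colored vertex of H outside H receives color 2, then G admits such a partition extending both. -/

import Mathlib

/-- `A` induces a forest of maximum degree at most 3 in `G`. -/
def SimpleGraph.IsForest3On {V : Type*} (G : SimpleGraph V) (A : Set V) : Prop :=
  (G.induce A).IsAcyclic ∧ ∀ v : A, ((G.induce A).neighborSet v).encard ≤ 3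

open SimpleGraph Walk

namespace StmtAux

variable {V : Type*} {G : SimpleGraph V}

lemma end_mem_tail {x y : V} (p : G.Walk x y) (hnil : ¬ p.Nil) : y ∈ p.support.tail := by
  cases p with
  | nil => simp at hnil
  | cons h q => simpa using q.end_mem_support

lemma mem_tail_of_closed {v : V} (p : G.Walk v v) (hnil : ¬ p.Nil) {z : V}
    (hz : z ∈ p.support) : z ∈ p.support.tail := by
  cases p with
  | nil => simp at hnil
  | cons h q =>
    simp only [Walk.support_cons, List.tail_cons]
    rcases List.mem_cons.mp hz with rfl | hz
    · exact q.end_mem_support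
    · exact hz

lemma mem_rotate_iff [DecidableEq V] {v u z : V} {p : G.Walk v v} (hp : p.IsCycle) (h : u ∈ p.support) :
    z ∈ (p.rotate u h).support ↔ z ∈ p.support := by
  have h2 := Walk.support_rotate p u h
  constructor
  · intro hz
    exact List.tail_subset _ (h2.mem_iff.mp (mem_tail_of_closed _ (hp.rotate h).not_nil hz))
  · intro hz
    exact List.tail_subset _ (h2.mem_iff.mpr (mem_tail_of_closed _ hp.not_nil hz))

lemma crossing {S1 S2 : Set V}
    (hedge : ∀ a b, G.Adj a b → (a ∈ S1 ∧ b ∈ S1) ∨ (a ∈ S2 ∧ b ∈ S2))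
    {a b : V} (p : G.Walk a b) (ha : a ∉ S1) (hb : b ∈ S1) :
    ∃ w ∈ p.support, w ∈ S1 ∧ w ∈ S2 := by
  obtain ⟨d, hd, hd1, hd2⟩ := p.exists_boundary_dart S1ᶜ ha (not_not_intro hb)
  rcases hedge _ _ d.adj with ⟨h1, _⟩ | ⟨_, h2⟩
  · exact absurd h1 hd1
  · exact ⟨d.snd, p.dart_snd_mem_support_of_mem_darts hd, not_not.mp hd2, h2⟩

lemma confine_side {S1 S2 : Set V}
    (hedge : ∀ a b, G.Adj a b → (a ∈ S1 ∧ b ∈ S1) ∨ (a ∈ S2 ∧ b ∈ S2)) {v : V} :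
    ∀ {x : V} (s : G.Walk x v), s.IsPath → x ∈ S1 → x ∉ S2 →
      (∀ z ∈ s.support, z ∈ S1 → z ∈ S2 → z = v) → ∀ z ∈ s.support, z ∈ S1 := by
  intro x s
  induction s with
  | nil =>
    intro _ h1 _ _ z hz
    rw [Walk.support_nil, List.mem_singleton] at hz
    exact hz ▸ h1
  | @cons x y w h s ih =>
    intro hp hx1 hx2 hH z hz
    have hy1 : y ∈ S1 := by
      rcases hedge _ _ h with ⟨_, h1⟩ | ⟨h1, _⟩
      · exact h1
      · exact absurd h1 hx2
    rw [Walk.support_cons, List.mem_cons] at hz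
    rcases hz with rfl | hz
    · exact hx1
    by_cases hy2 : y ∈ S2
    · have hyv : y = w := hH y (by simp) hy1 hy2
      subst hyv
      have hnil : s = Walk.nil := (Walk.isPath_iff_eq_nil (p := s)).mp hp.of_cons
      subst hnil
      rw [Walk.support_nil, List.mem_singleton] at hz
      exact hz ▸ hy1
    · exact ih hp.of_cons hy1 hy2 (fun z hz' => hH z (by simp [hz'])) z hz

lemma confine {S1 S2 : Set V}
    (hedge : ∀ a b, G.Adj a b → (a ∈ S1 ∧ b ∈ S1) ∨ (a ∈ S2 ∧ b ∈ S2))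
    (hcov : ∀ x : V, x ∈ S1 ∨ x ∈ S2)
    {u v : V} (r : G.Walk u v) (hr : r.IsPath)
    (hu1 : u ∈ S1) (hu2 : u ∈ S2) (hv1 : v ∈ S1) (hv2 : v ∈ S2)
    (hint : ∀ z ∈ r.support, z ∈ S1 → z ∈ S2 → z = u ∨ z = v) :
    (∀ z ∈ r.support, z ∈ S1) ∨ (∀ z ∈ r.support, z ∈ S2) := by
  have hedge' : ∀ a b, G.Adj a b → (a ∈ S2 ∧ b ∈ S2) ∨ (a ∈ S1 ∧ b ∈ S1) :=
    fun a b hab => (hedge a b hab).symm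
  cases r with
  | nil =>
    left; intro z hz
    rw [Walk.support_nil, List.mem_singleton] at hz
    exact hz ▸ hu1
  | @cons _ y _ h s =>
    have hus : u ∉ s.support := ((Walk.cons_isPath_iff h s).mp hr).2
    have hint' : ∀ z ∈ s.support, z ∈ S1 → z ∈ S2 → z = v := by
      intro z hz h1 h2
      rcases hint z (by simp [hz]) h1 h2 with rfl | rfl
      · exact absurd hz hus
      · rfl
    by_cases hy : y ∈ S1 ∧ y ∈ S2
    · have hyv : y = v := hint' y s.start_mem_support hy.1 hy.2
      subst hyv
      have hnil : s = Walk.nil := (Walk.isPath_iff_eq_nil (p := s)).mp hr.of_cons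
      subst hnil
      left; intro z hz
      simp only [Walk.support_cons, Walk.support_nil, List.mem_cons,
        List.mem_singleton] at hz
      rcases hz with rfl | rfl | hz
      · exact hu1
      · exact hy.1
      · simp at hz
    · rcases hcov y with hy1 | hy2
      · have hy2 : y ∉ S2 := fun h2 => hy ⟨hy1, h2⟩
        left
        intro z hz
        rw [Walk.support_cons, List.mem_cons] at hz
        rcases hz with rfl | hz
        · exact hu1
        · exact confine_side hedge s hr.of_cons hy1 hy2 hint' z hz
      · have hy1 : y ∉ S1 := fun h1 => hy ⟨h1, hy2⟩
        right
        intro z hz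
        rw [Walk.support_cons, List.mem_cons] at hz
        rcases hz with rfl | hz
        · exact hu2
        · exact confine_side hedge' s hr.of_cons hy2 hy1
            (fun z hz' h2 h1 => hint' z hz' h1 h2) z hz

lemma edge_not_mem {u v : V} (s : G.Walk u v) (hs : s.IsPath) (h2 : 2 ≤ s.length) :
    s(u, v) ∉ s.edges := by
  cases s with
  | nil => simp
  | @cons _ y _ h s' =>
    rw [Walk.edges_cons, List.mem_cons]
    rintro (he | he)
    · rw [Sym2.eq_iff] at he
      rcases he with ⟨-, rfl⟩ | ⟨rfl, rfl⟩
      · have hnil : s' = Walk.nil := (Walk.isPath_iff_eq_nil (p := s')).mp hs.of_cons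
        subst hnil
        simp at h2
      · exact h.ne rfl
    · exact ((Walk.cons_isPath_iff h s').mp hs).2 (Walk.fst_mem_support_of_mem_edges s' he)


lemma lift_walk {A B : Set V} :
    ∀ {a b : ↥A} (p : (G.induce A).Walk a b) (ha : (a : V) ∈ B) (hb : (b : V) ∈ B),
    (∀ z ∈ p.support, (z : V) ∈ B) →
    ∃ q : (G.induce B).Walk ⟨a, ha⟩ ⟨b, hb⟩,
      q.length = p.length ∧ q.support.map Subtype.val = p.support.map Subtype.val ∧
      q.edges.map (Sym2.map Subtype.val) = p.edges.map (Sym2.map Subtype.val) := by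
  intro a b p
  induction p with
  | nil => intro ha hb _; exact ⟨Walk.nil, by simp, by simp, by simp⟩
  | @cons x y z h p ih =>
    intro ha hb hsup
    have hy : (y : V) ∈ B := hsup y (by simp)
    obtain ⟨q, hlen, hsupp, hedg⟩ := ih hy hb (fun z hz => hsup z (by simp [hz]))
    have hadj : (G.induce B).Adj ⟨(x : V), ha⟩ ⟨(y : V), hy⟩ := by
      simp only [comap_adj, Function.Embedding.coe_subtype] at h ⊢
      exact h
    refine ⟨Walk.cons hadj q, by simp [hlen], by simp [hsupp], ?_⟩
    simp only [Walk.edges_cons, List.map_cons, hedg, Sym2.map_pair_eq]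

lemma lift_cycle {A B : Set V} {a : ↥A} (p : (G.induce A).Walk a a) (hp : p.IsCycle)
    (ha : (a : V) ∈ B) (hsup : ∀ z ∈ p.support, (z : V) ∈ B) :
    ¬ (G.induce B).IsAcyclic := by
  obtain ⟨q, hlen, hsupp, hedg⟩ := lift_walk p ha ha hsup
  intro hacy
  refine hacy q ?_
  rw [Walk.isCycle_def, Walk.isTrail_def]
  refine ⟨?_, ?_, ?_⟩
  · have h1 : (p.edges.map (Sym2.map (Subtype.val : ↥A → V))).Nodup :=
      hp.isTrail.edges_nodup.map (Sym2.map.injective Subtype.val_injective)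
    rw [← hedg] at h1
    exact h1.of_map _
  · intro hq
    have := hp.three_le_length
    rw [← hlen, hq] at this
    simp at this
  · have h1 : (p.support.tail.map (Subtype.val : ↥A → V)).Nodup :=
      hp.support_nodup.map Subtype.val_injective
    have h2 : q.support.tail.map (Subtype.val : ↥B → V)
        = p.support.tail.map Subtype.val := by
      rw [List.map_tail, List.map_tail, hsupp]
    rw [← h2] at h1
    exact h1.of_map _

lemma lift_path_cycle {A B : Set V} {a b : ↥A} (p : (G.induce A).Walk a b) (hp : p.IsPath)
    (h2 : 2 ≤ p.length) (hadj : G.Adj a b)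
    (ha : (a : V) ∈ B) (hb : (b : V) ∈ B) (hsup : ∀ z ∈ p.support, (z : V) ∈ B) :
    ¬ (G.induce B).IsAcyclic := by
  obtain ⟨q, hlen, hsupp, hedg⟩ := lift_walk p ha hb hsup
  have hq : q.IsPath := by
    rw [Walk.isPath_def]
    have h1 : (p.support.map (Subtype.val : ↥A → V)).Nodup :=
      hp.support_nodup.map Subtype.val_injective
    rw [← hsupp] at h1
    exact h1.of_map _
  have hadj' : (G.induce B).Adj ⟨(a : V), ha⟩ ⟨(b : V), hb⟩ := by
    simp only [comap_adj, Function.Embedding.coe_subtype]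
    exact hadj
  have hne : s(⟨(a : V), ha⟩, (⟨(b : V), hb⟩ : ↥B)) ∉ q.edges :=
    edge_not_mem q hq (by omega)
  intro hacy
  refine hacy (Walk.cons hadj' q.reverse) ?_
  rw [Walk.cons_isCycle_iff]
  refine ⟨hq.reverse, ?_⟩
  rw [Walk.edges_reverse, List.mem_reverse]
  exact hne

lemma cycle_split [DecidableEq V] {u x : V} {p : G.Walk u u} (hp : p.IsCycle)
    (hx : x ∈ p.support) (hne : x ≠ u) :
    (p.takeUntil x hx).IsPath ∧ (p.dropUntil x hx).IsPath := by
  have hspec := p.take_spec hx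
  set t1 := p.takeUntil x hx with ht1
  set t2 := p.dropUntil x hx with ht2
  have hsupp : t1.support ++ t2.support.tail = p.support := by
    rw [← Walk.support_append, hspec]
  have htail : t1.support.tail ++ t2.support.tail = p.support.tail := by
    have h1 : t1.support = u :: t1.support.tail := t1.support_eq_cons
    have h2 : p.support = u :: p.support.tail := p.support_eq_cons
    rw [h1] at hsupp
    rw [h2] at hsupp
    simp only [List.cons_append, List.cons.injEq, true_and] at hsupp
    exact hsupp
  have hnd : (t1.support.tail ++ t2.support.tail).Nodup := by
    rw [htail]; exact hp.support_nodup
  rw [List.nodup_append'] at hnd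
  obtain ⟨hnd1, hnd2, hdisj⟩ := hnd
  have ht2nil : ¬ t2.Nil := by
    intro hn
    exact hne (Walk.Nil.eq hn)
  have ht1nil : ¬ t1.Nil := by
    intro hn
    exact hne (Walk.Nil.eq hn).symm
  constructor
  · rw [Walk.isPath_def, t1.support_eq_cons]
    refine List.nodup_cons.mpr ⟨?_, hnd1⟩
    intro hu
    exact hdisj hu (end_mem_tail t2 ht2nil)
  · rw [Walk.isPath_def, t2.support_eq_cons]
    refine List.nodup_cons.mpr ⟨?_, hnd2⟩
    intro hxmem
    exact hdisj (end_mem_tail t1 ht1nil) hxmem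


lemma glue_acyclic [DecidableEq V] {A S1 S2 : Set V}
    (hcov : ∀ x : V, x ∈ S1 ∨ x ∈ S2)
    (hedge : ∀ a b, G.Adj a b → (a ∈ S1 ∧ b ∈ S1) ∨ (a ∈ S2 ∧ b ∈ S2))
    (hH : (∃ u, S1 ∩ S2 = {u}) ∨ (∃ u v, G.Adj u v ∧ S1 ∩ S2 = {u, v}))
    (hacy1 : (G.induce (A ∩ S1)).IsAcyclic)
    (hacy2 : (G.induce (A ∩ S2)).IsAcyclic) :
    (G.induce A).IsAcyclic := by
  intro w0 p hp
  have hedge' : ∀ x y : ↥A, (G.induce A).Adj x y →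
      (x ∈ {x : ↥A | (x : V) ∈ S1} ∧ y ∈ {x : ↥A | (x : V) ∈ S1}) ∨
      (x ∈ {x : ↥A | (x : V) ∈ S2} ∧ y ∈ {x : ↥A | (x : V) ∈ S2}) := by
    intro x y hxy
    simp only [comap_adj, Function.Embedding.coe_subtype] at hxy
    exact hedge _ _ hxy
  have hcov' : ∀ x : ↥A, x ∈ {x : ↥A | (x : V) ∈ S1} ∨ x ∈ {x : ↥A | (x : V) ∈ S2} :=
    fun x => hcov x
  by_cases hall1 : ∀ z ∈ p.support, (z : V) ∈ S1
  · exact lift_cycle (B := A ∩ S1) p hp ⟨w0.2, hall1 _ p.start_mem_support⟩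
      (fun z hz => ⟨z.2, hall1 z hz⟩) hacy1
  by_cases hall2 : ∀ z ∈ p.support, (z : V) ∈ S2
  · exact lift_cycle (B := A ∩ S2) p hp ⟨w0.2, hall2 _ p.start_mem_support⟩
      (fun z hz => ⟨z.2, hall2 z hz⟩) hacy2
  push_neg at hall1 hall2
  obtain ⟨a, haS, ha1⟩ := hall1
  obtain ⟨b, hbS, hb2⟩ := hall2
  have ha2 : (a : V) ∈ S2 := (hcov a).resolve_left ha1
  have hb1 : (b : V) ∈ S1 := (hcov b).resolve_right hb2
  set p1 := p.rotate a haS with hp1def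
  have hp1 : p1.IsCycle := hp.rotate haS
  have hbS1 : b ∈ p1.support := (mem_rotate_iff hp haS).mpr hbS
  set q1 := p1.takeUntil b hbS1 with hq1def
  set q2 := p1.dropUntil b hbS1 with hq2def
  obtain ⟨w1, hw1S, hw11, hw12⟩ :=
    crossing (S1 := {x : ↥A | (x : V) ∈ S1}) (S2 := {x : ↥A | (x : V) ∈ S2})
      hedge' q1 ha1 hb1
  obtain ⟨w2, hw2S, hw22, hw21⟩ :=
    crossing (S1 := {x : ↥A | (x : V) ∈ S2}) (S2 := {x : ↥A | (x : V) ∈ S1})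
      (fun x y h => (hedge' x y h).symm) q2 hb2 ha2
  have hw1t : w1 ∈ q1.support.tail := by
    have := q1.support_eq_cons ▸ hw1S
    rcases List.mem_cons.mp this with rfl | h
    · exact absurd hw11 ha1
    · exact h
  have hw2t : w2 ∈ q2.support.tail := by
    have := q2.support_eq_cons ▸ hw2S
    rcases List.mem_cons.mp this with rfl | h
    · exact absurd hw22 hb2
    · exact h
  have htail : q1.support.tail ++ q2.support.tail = p1.support.tail := by
    have hsupp : q1.support ++ q2.support.tail = p1.support := by
      rw [← Walk.support_append, p1.take_spec hbS1]
    rw [q1.support_eq_cons] at hsupp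
    rw [p1.support_eq_cons] at hsupp
    simp only [List.cons_append, List.cons.injEq, true_and] at hsupp
    exact hsupp
  have hnd : (q1.support.tail ++ q2.support.tail).Nodup := by
    rw [htail]; exact hp1.support_nodup
  rw [List.nodup_append'] at hnd
  have hww : w1 ≠ w2 := fun h => hnd.2.2 hw1t (h ▸ hw2t)
  rcases hH with ⟨u, hu⟩ | ⟨u, v, huv, huvset⟩
  · apply hww
    have e1 : (w1 : V) = u := by
      have h : (w1 : V) ∈ S1 ∩ S2 := ⟨hw11, hw12⟩
      rw [hu] at h; exact h
    have e2 : (w2 : V) = u := by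
      have h : (w2 : V) ∈ S1 ∩ S2 := ⟨hw21, hw22⟩
      rw [hu] at h; exact h
    exact Subtype.ext (e1.trans e2.symm)
  · have m1 : (w1 : V) ∈ ({u, v} : Set V) := by
      rw [← huvset]; exact ⟨hw11, hw12⟩
    have m2 : (w2 : V) ∈ ({u, v} : Set V) := by
      rw [← huvset]; exact ⟨hw21, hw22⟩
    have hnev : (w1 : V) ≠ (w2 : V) := fun h => hww (Subtype.ext h)
    have hvw : ((w1 : V) = u ∧ (w2 : V) = v) ∨ ((w1 : V) = v ∧ (w2 : V) = u) := by
      rcases m1 with h1 | h1 <;> rcases m2 with h2 | h2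
      · exact absurd (h1.trans h2.symm) hnev
      · exact Or.inl ⟨h1, h2⟩
      · exact Or.inr ⟨h1, h2⟩
      · exact absurd (h1.trans h2.symm) hnev
    have hadj12 : G.Adj w1 w2 := by
      rcases hvw with ⟨h1, h2⟩ | ⟨h1, h2⟩ <;> rw [h1, h2]
      · exact huv
      · exact huv.symm
    have hset : ∀ z : V, z ∈ S1 → z ∈ S2 → z = w1 ∨ z = w2 := by
      intro z h1 h2
      have hz : z ∈ ({u, v} : Set V) := by rw [← huvset]; exact ⟨h1, h2⟩
      rcases hz with rfl | rfl
      · rcases hvw with ⟨e1, -⟩ | ⟨-, e2⟩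
        · exact Or.inl e1.symm
        · exact Or.inr e2.symm
      · rcases hvw with ⟨-, e2⟩ | ⟨e1, -⟩
        · exact Or.inr e2.symm
        · exact Or.inl e1.symm
    have hw1P : w1 ∈ p.support :=
      (mem_rotate_iff hp haS).mp (p1.support_takeUntil_subset hbS1 hw1S)
    set p2 := p.rotate w1 hw1P with hp2def
    have hp2 : p2.IsCycle := hp.rotate hw1P
    have hw2P : w2 ∈ p2.support := by
      have h : w2 ∈ p1.support := p1.support_dropUntil_subset hbS1 hw2S
      exact (mem_rotate_iff hp hw1P).mpr ((mem_rotate_iff hp haS).mp h)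
    obtain ⟨hr1p, hr2p⟩ := cycle_split hp2 hw2P (Ne.symm hww)
    set r1 := p2.takeUntil w2 hw2P with hr1def
    set r2 := p2.dropUntil w2 hw2P with hr2def
    have hint1 : ∀ z ∈ r1.support, z ∈ {x : ↥A | (x : V) ∈ S1} →
        z ∈ {x : ↥A | (x : V) ∈ S2} → z = w1 ∨ z = w2 := by
      intro z _ h1 h2
      rcases hset z h1 h2 with h | h
      · exact Or.inl (Subtype.ext h)
      · exact Or.inr (Subtype.ext h)
    have hint2 : ∀ z ∈ r2.support, z ∈ {x : ↥A | (x : V) ∈ S1} →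
        z ∈ {x : ↥A | (x : V) ∈ S2} → z = w2 ∨ z = w1 := by
      intro z _ h1 h2
      rcases hset z h1 h2 with h | h
      · exact Or.inr (Subtype.ext h)
      · exact Or.inl (Subtype.ext h)
    have hconf1 := confine (S1 := {x : ↥A | (x : V) ∈ S1})
      (S2 := {x : ↥A | (x : V) ∈ S2}) hedge' hcov' r1 hr1p hw11 hw12 hw21 hw22 hint1
    have hconf2 := confine (S1 := {x : ↥A | (x : V) ∈ S1})
      (S2 := {x : ↥A | (x : V) ∈ S2}) hedge' hcov' r2 hr2p hw21 hw22 hw11 hw12 hint2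
    have hlen : r1.length + r2.length = p2.length := by
      conv_rhs => rw [← p2.take_spec hw2P]
      rw [Walk.length_append]
    have h3 := hp2.three_le_length
    have key : ∀ (x y : ↥A) (r : (G.induce A).Walk x y), r.IsPath → 2 ≤ r.length →
        G.Adj x y → ((∀ z ∈ r.support, (z : V) ∈ S1) ∨ (∀ z ∈ r.support, (z : V) ∈ S2)) →
        False := by
      intro x y r hrp hr2 hxy hside
      rcases hside with hs | hs
      · exact lift_path_cycle (B := A ∩ S1) r hrp hr2 hxy ⟨x.2, hs _ r.start_mem_support⟩
          ⟨y.2, hs _ r.end_mem_support⟩ (fun z hz => ⟨z.2, hs z hz⟩) hacy1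
      · exact lift_path_cycle (B := A ∩ S2) r hrp hr2 hxy ⟨x.2, hs _ r.start_mem_support⟩
          ⟨y.2, hs _ r.end_mem_support⟩ (fun z hz => ⟨z.2, hs z hz⟩) hacy2
    by_cases hlen1 : 2 ≤ r1.length
    · exact key _ _ r1 hr1p hlen1 hadj12 hconf1
    · exact key _ _ r2 hr2p (by omega) hadj12.symm hconf2

end StmtAux

/-- Gluing decompositions across a cut vertex or cut edge: `G = G1 ∪ G2` with
`H = G1 ∩ G2` a single vertex or a single edge.  Colorings `c1, c2` of `G1, G2`
(color `0` inducing a forest of max degree `≤ 3`, color `1` inducing a forest)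
that agree on `H`, such that in each `Gi` every neighbor outside `H` of a vertex of
`H` colored `0` receives color `1`, glue to such a coloring of `G` extending both. -/
theorem stmt6 {V : Type*} (G : SimpleGraph V) (G1 G2 : G.Subgraph)
    (hind1 : G1.IsInduced) (hind2 : G2.IsInduced)
    (hunion : G1 ⊔ G2 = ⊤)
    (hH : (∃ u, (G1 ⊓ G2).verts = {u}) ∨
          (∃ u v, G.Adj u v ∧ (G1 ⊓ G2).verts = {u, v}))
    (c1 c2 : V → Fin 2)
    (hf31 : G.IsForest3On {v | v ∈ G1.verts ∧ c1 v = 0})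
    (hf1 : (G.induce {v | v ∈ G1.verts ∧ c1 v = 1}).IsAcyclic)
    (hf32 : G.IsForest3On {v | v ∈ G2.verts ∧ c2 v = 0})
    (hf2 : (G.induce {v | v ∈ G2.verts ∧ c2 v = 1}).IsAcyclic)
    (hagree : ∀ v ∈ (G1 ⊓ G2).verts, c1 v = c2 v)
    (hnb1 : ∀ v ∈ (G1 ⊓ G2).verts, c1 v = 0 →
      ∀ u ∈ G1.verts, u ∉ (G1 ⊓ G2).verts → G.Adj v u → c1 u = 1)
    (hnb2 : ∀ v ∈ (G1 ⊓ G2).verts, c2 v = 0 →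
      ∀ u ∈ G2.verts, u ∉ (G1 ⊓ G2).verts → G.Adj v u → c2 u = 1) :
    ∃ c : V → Fin 2,
      (∀ v ∈ G1.verts, c v = c1 v) ∧ (∀ v ∈ G2.verts, c v = c2 v) ∧
      G.IsForest3On {v | c v = 0} ∧ (G.induce {v | c v = 1}).IsAcyclic := by
  classical
  rw [Subgraph.verts_inf] at hH hagree hnb1 hnb2
  have hcov : ∀ v : V, v ∈ G1.verts ∨ v ∈ G2.verts := by
    intro v
    have hv : v ∈ (G1 ⊔ G2).verts := by rw [hunion, Subgraph.verts_top]; trivial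
    rwa [Subgraph.verts_sup] at hv
  have hedge : ∀ a b, G.Adj a b →
      (a ∈ G1.verts ∧ b ∈ G1.verts) ∨ (a ∈ G2.verts ∧ b ∈ G2.verts) := by
    intro a b hab
    have h : (G1 ⊔ G2).Adj a b := by rw [hunion]; exact hab
    rcases Subgraph.sup_adj.mp h with h | h
    · exact Or.inl ⟨h.fst_mem, h.snd_mem⟩
    · exact Or.inr ⟨h.fst_mem, h.snd_mem⟩
  set c : V → Fin 2 := fun v => if v ∈ G1.verts then c1 v else c2 v with hcdef
  have hc1 : ∀ v ∈ G1.verts, c v = c1 v := fun v hv => if_pos hv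
  have hc2 : ∀ v ∈ G2.verts, c v = c2 v := by
    intro v hv
    by_cases h1 : v ∈ G1.verts
    · rw [hcdef]; simp only [if_pos h1]; exact hagree v ⟨h1, hv⟩
    · exact if_neg h1
  have hA0 : {v | c v = 0} ∩ G1.verts = {v | v ∈ G1.verts ∧ c1 v = 0} := by
    ext v
    constructor
    · rintro ⟨hc0, hv⟩; exact ⟨hv, by rw [← hc1 v hv]; exact hc0⟩
    · rintro ⟨hv, h0⟩; exact ⟨show c v = 0 by rw [hc1 v hv]; exact h0, hv⟩
  have hA0' : {v | c v = 0} ∩ G2.verts = {v | v ∈ G2.verts ∧ c2 v = 0} := by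
    ext v
    constructor
    · rintro ⟨hc0, hv⟩; exact ⟨hv, by rw [← hc2 v hv]; exact hc0⟩
    · rintro ⟨hv, h0⟩; exact ⟨show c v = 0 by rw [hc2 v hv]; exact h0, hv⟩
  have hB1 : {v | c v = 1} ∩ G1.verts = {v | v ∈ G1.verts ∧ c1 v = 1} := by
    ext v
    constructor
    · rintro ⟨hc0, hv⟩; exact ⟨hv, by rw [← hc1 v hv]; exact hc0⟩
    · rintro ⟨hv, h0⟩; exact ⟨show c v = 1 by rw [hc1 v hv]; exact h0, hv⟩
  have hB1' : {v | c v = 1} ∩ G2.verts = {v | v ∈ G2.verts ∧ c2 v = 1} := by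
    ext v
    constructor
    · rintro ⟨hc0, hv⟩; exact ⟨hv, by rw [← hc2 v hv]; exact hc0⟩
    · rintro ⟨hv, h0⟩; exact ⟨show c v = 1 by rw [hc2 v hv]; exact h0, hv⟩
  refine ⟨c, hc1, hc2, ⟨?_, ?_⟩, ?_⟩
  · -- acyclicity of color 0
    exact StmtAux.glue_acyclic hcov hedge hH
      (by rw [hA0]; exact hf31.1) (by rw [hA0']; exact hf32.1)
  · -- degree bound for color 0
    intro v
    have hv0 : c ↑v = 0 := v.2
    by_cases hvH : (v : V) ∈ G1.verts ∩ G2.verts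
    · have hnbH : ∀ x : {v | c v = 0}, (G.induce {v | c v = 0}).Adj v x →
          (x : V) ∈ G1.verts ∩ G2.verts := by
        intro x hx
        simp only [comap_adj, Function.Embedding.coe_subtype] at hx
        by_contra hxH
        have hx0 : c ↑x = 0 := x.2
        rcases hedge _ _ hx with ⟨h1, h2⟩ | ⟨h1, h2⟩
        · have h := hnb1 ↑v hvH (by rw [← hc1 _ h1]; exact hv0) ↑x h2 hxH hx
          rw [← hc1 _ h2] at h
          exact absurd (h.symm.trans hx0) (by decide)
        · have h := hnb2 ↑v hvH (by
              rw [← hc2 _ hvH.2]; exact hv0)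
            ↑x h2 hxH hx
          rw [← hc2 _ h2] at h
          exact absurd (h.symm.trans hx0) (by decide)
      have hsub : ∀ x y, x ∈ (G.induce {v | c v = 0}).neighborSet v →
          y ∈ (G.induce {v | c v = 0}).neighborSet v → x = y := by
        intro x y hx hy
        have hxH := hnbH x hx
        have hyH := hnbH y hy
        have hxv : (x : V) ≠ (v : V) := by
          have : G.Adj ↑v ↑x := by
            simpa only [mem_neighborSet, comap_adj, Function.Embedding.coe_subtype] using hx
          exact this.ne'
        have hyv : (y : V) ≠ (v : V) := by
          have : G.Adj ↑v ↑y := by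
            simpa only [mem_neighborSet, comap_adj, Function.Embedding.coe_subtype] using hy
          exact this.ne'
        rcases hH with ⟨u, hu⟩ | ⟨u1, u2, _, hu⟩
        · exfalso
          have e1 : (x : V) = u := by rw [← Set.mem_singleton_iff, ← hu]; exact hxH
          have e2 : (v : V) = u := by rw [← Set.mem_singleton_iff, ← hu]; exact hvH
          exact hxv (e1.trans e2.symm)
        · have hv' : (v : V) ∈ ({u1, u2} : Set V) := by rw [← hu]; exact hvH
          have hx' : (x : V) ∈ ({u1, u2} : Set V) := by rw [← hu]; exact hxH
          have hy' : (y : V) ∈ ({u1, u2} : Set V) := by rw [← hu]; exact hyH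
          apply Subtype.ext
          rcases hv' with e | e
          · rcases hx' with ex | ex
            · exact absurd (ex.trans e.symm) hxv
            · rcases hy' with ey | ey
              · exact absurd (ey.trans e.symm) hyv
              · exact ex.trans ey.symm
          · rcases hx' with ex | ex
            · rcases hy' with ey | ey
              · exact ex.trans ey.symm
              · exact absurd (ey.trans e.symm) hyv
            · exact absurd (ex.trans e.symm) hxv
      exact le_trans (Set.encard_le_one_iff.mpr hsub) (by norm_num)
    · rcases hcov ↑v with hv1 | hv2
      · have hv2' : (v : V) ∉ G2.verts := fun h => hvH ⟨hv1, h⟩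
        have hvA1 : (v : V) ∈ {v | v ∈ G1.verts ∧ c1 v = 0} :=
          ⟨hv1, by rw [← hc1 _ hv1]; exact hv0⟩
        have himg : Subtype.val '' ((G.induce {v | c v = 0}).neighborSet v) ⊆
            Subtype.val '' ((G.induce {v | v ∈ G1.verts ∧ c1 v = 0}).neighborSet
              ⟨(v : V), hvA1⟩) := by
          rintro z ⟨x, hx, rfl⟩
          have hadj : G.Adj ↑v ↑x := by
            simpa only [mem_neighborSet, comap_adj, Function.Embedding.coe_subtype] using hx
          have hx1 : (x : V) ∈ G1.verts := by
            rcases hedge _ _ hadj with ⟨-, h⟩ | ⟨h1, -⟩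
            · exact h
            · exact absurd h1 hv2'
          have hxA1 : (x : V) ∈ {v | v ∈ G1.verts ∧ c1 v = 0} :=
            ⟨hx1, by rw [← hc1 _ hx1]; exact x.2⟩
          refine ⟨⟨(x : V), hxA1⟩, ?_, rfl⟩
          simp only [mem_neighborSet, comap_adj, Function.Embedding.coe_subtype]
          exact hadj
        calc ((G.induce {v | c v = 0}).neighborSet v).encard
            = (Subtype.val '' ((G.induce {v | c v = 0}).neighborSet v)).encard :=
              (Subtype.val_injective.injOn.encard_image).symm
          _ ≤ (Subtype.val '' ((G.induce {v | v ∈ G1.verts ∧ c1 v = 0}).neighborSet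
                ⟨(v : V), hvA1⟩)).encard := Set.encard_mono himg
          _ = ((G.induce {v | v ∈ G1.verts ∧ c1 v = 0}).neighborSet
                ⟨(v : V), hvA1⟩).encard := Subtype.val_injective.injOn.encard_image
          _ ≤ 3 := hf31.2 _
      · have hv1' : (v : V) ∉ G1.verts := fun h => hvH ⟨h, hv2⟩
        have hvA2 : (v : V) ∈ {v | v ∈ G2.verts ∧ c2 v = 0} :=
          ⟨hv2, by rw [← hc2 _ hv2]; exact hv0⟩
        have himg : Subtype.val '' ((G.induce {v | c v = 0}).neighborSet v) ⊆
            Subtype.val '' ((G.induce {v | v ∈ G2.verts ∧ c2 v = 0}).neighborSet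
              ⟨(v : V), hvA2⟩) := by
          rintro z ⟨x, hx, rfl⟩
          have hadj : G.Adj ↑v ↑x := by
            simpa only [mem_neighborSet, comap_adj, Function.Embedding.coe_subtype] using hx
          have hx2 : (x : V) ∈ G2.verts := by
            rcases hedge _ _ hadj with ⟨h1, -⟩ | ⟨-, h⟩
            · exact absurd h1 hv1'
            · exact h
          have hxA2 : (x : V) ∈ {v | v ∈ G2.verts ∧ c2 v = 0} :=
            ⟨hx2, by rw [← hc2 _ hx2]; exact x.2⟩
          refine ⟨⟨(x : V), hxA2⟩, ?_, rfl⟩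
          simp only [mem_neighborSet, comap_adj, Function.Embedding.coe_subtype]
          exact hadj
        calc ((G.induce {v | c v = 0}).neighborSet v).encard
            = (Subtype.val '' ((G.induce {v | c v = 0}).neighborSet v)).encard :=
              (Subtype.val_injective.injOn.encard_image).symm
          _ ≤ (Subtype.val '' ((G.induce {v | v ∈ G2.verts ∧ c2 v = 0}).neighborSet
                ⟨(v : V), hvA2⟩)).encard := Set.encard_mono himg
          _ = ((G.induce {v | v ∈ G2.verts ∧ c2 v = 0}).neighborSet
                ⟨(v : V), hvA2⟩).encard := Subtype.val_injective.injOn.encard_image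
          _ ≤ 3 := hf32.2 _
  · -- acyclicity of color 1
    exact StmtAux.glue_acyclic hcov hedge hH
      (by rw [hB1]; exact hf1) (by rw [hB1']; exact hf2)
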